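/- In a finite-dimensional sequential product space, every effect a admits a spectral decomposition: there exist pairwise orthogonal sharp effects p_1,…,p_n (meaning p_i & p_j = 0 for i ≠ j), each compatible with a, and positive scalars λ_1,…,λ_n such that a = Σ_i λ_i p_i. -/

import Mathlib

open scoped BigOperators

/-- A sequential product space: an order unit space `(V, ≤, unit)` with a binary
operation `seq` on its effects satisfying axioms (S1)-(S7). -/
structure SPS (V : Type*) [NormedAddCommGroup V] [NormedSpace ℝ V] [PartialOrder V] where
  unit : V
  seq : V → V → V
  /-- The effects: elements `a` with `0 ≤ a ≤ unit`. -/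
  Eff : V → Prop
  eff_iff : ∀ a : V, Eff a ↔ 0 ≤ a ∧ a ≤ unit
  eff_unit : Eff unit
  /-- `V` is an ordered vector space. -/
  add_le_add_right' : ∀ a b c : V, a ≤ b → a + c ≤ b + c
  smul_le_smul' : ∀ (r : ℝ) (a b : V), 0 ≤ r → a ≤ b → r • a ≤ r • b
  /-- `unit` is a strong unit. -/
  strong : ∀ a : V, ∃ n : ℕ, -((n : ℝ) • unit) ≤ a ∧ a ≤ (n : ℝ) • unit
  /-- Archimedean property. -/
  arch : ∀ a : V, (∀ n : ℕ, a ≤ ((n : ℝ) + 1)⁻¹ • unit) → a ≤ 0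
  /-- The norm of `V` is the order-unit norm. -/
  norm_def : ∀ a : V, ‖a‖ = sInf {r : ℝ | 0 ≤ r ∧ -(r • unit) ≤ a ∧ a ≤ r • unit}
  seq_eff : ∀ a b : V, Eff a → Eff b → Eff (seq a b)
  /-- (S1) additivity in the second argument. -/
  s1 : ∀ a b c : V, Eff a → Eff b → Eff c → Eff (b + c) →
      seq a (b + c) = seq a b + seq a c
  /-- (S2) norm-continuity in the first argument. -/
  s2 : ∀ b : V, Eff b → ContinuousOn (fun a => seq a b) {a : V | Eff a}
  /-- (S3) unitality. -/
  s3 : ∀ a : V, Eff a → seq unit a = a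
  /-- (S4) orthogonal effects are compatible. -/
  s4 : ∀ a b : V, Eff a → Eff b → seq a b = 0 → seq b a = 0
  /-- (S5) associativity for compatible effects. -/
  s5 : ∀ a b c : V, Eff a → Eff b → Eff c → seq a b = seq b a →
      seq a (seq b c) = seq (seq a b) c
  /-- (S6) compatibility is preserved by complements. -/
  s6a : ∀ a b : V, Eff a → Eff b → seq a b = seq b a →
      seq a (unit - b) = seq (unit - b) a
  /-- (S6) compatibility is preserved by sums. -/
  s6b : ∀ a b c : V, Eff a → Eff b → Eff c → Eff (b + c) →
      seq a b = seq b a → seq a c = seq c a → seq a (b + c) = seq (b + c) a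
  /-- (S7) compatibility is preserved by the product. -/
  s7 : ∀ a b c : V, Eff a → Eff b → Eff c →
      seq a b = seq b a → seq a c = seq c a → seq a (seq b c) = seq (seq b c) a

namespace SPS

variable {V : Type*} [NormedAddCommGroup V] [NormedSpace ℝ V] [PartialOrder V]

/-- `a` and `b` are compatible: `a & b = b & a`. -/
def Compat (S : SPS V) (a b : V) : Prop := S.seq a b = S.seq b a

/-- An effect `p` is sharp when the only effect below both `p` and `unit - p` is `0`. -/
def Sharp (S : SPS V) (p : V) : Prop :=
  S.Eff p ∧ ∀ b : V, S.Eff b → b ≤ p → b ≤ S.unit - p → b = 0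

/-- An effect `p` is sharp (idempotence formulation): `p & p = p`. -/
def SharpI (S : SPS V) (p : V) : Prop := S.Eff p ∧ S.seq p p = p

/-- An effect `p` is atomic when `p ≠ 0` and every effect below `p` is a multiple of `p`. -/
def Atomic (S : SPS V) (p : V) : Prop :=
  S.Eff p ∧ p ≠ 0 ∧ ∀ a : V, S.Eff a → a ≤ p → ∃ t : ℝ, 0 ≤ t ∧ t ≤ 1 ∧ a = t • p

/-- `c` is the least sharp effect above `a` (the ceiling `⌈a⌉`). -/
def IsCeil (S : SPS V) (a c : V) : Prop :=
  S.SharpI c ∧ a ≤ c ∧ ∀ d : V, S.SharpI d → a ≤ d → c ≤ d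

/-- `f` is the greatest sharp effect below `a` (the floor `⌊a⌋`). -/
def IsFloor (S : SPS V) (a f : V) : Prop :=
  S.SharpI f ∧ f ≤ a ∧ ∀ d : V, S.SharpI d → d ≤ a → d ≤ f

end SPS

namespace SPS

variable {V : Type*} [NormedAddCommGroup V] [NormedSpace ℝ V] [PartialOrder V] (S : SPS V)

include S

/-! ### Basic order lemmas -/

lemma add_le_add_r {a b : V} (h : a ≤ b) (c : V) : a + c ≤ b + c :=
  S.add_le_add_right' a b c h

lemma add_le_add_l {a b : V} (h : a ≤ b) (c : V) : c + a ≤ c + b := by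
  simpa [add_comm] using S.add_le_add_r h c

lemma add_le_add'' {a b c d : V} (h1 : a ≤ b) (h2 : c ≤ d) : a + c ≤ b + d :=
  le_trans (S.add_le_add_r h1 c) (S.add_le_add_l h2 b)

lemma sub_nonneg' {a b : V} (h : a ≤ b) : 0 ≤ b - a := by
  simpa [sub_eq_add_neg] using S.add_le_add_r h (-a)

lemma le_of_sub_nonneg {a b : V} (h : 0 ≤ b - a) : a ≤ b := by
  simpa using S.add_le_add_r h a

lemma neg_le_neg' {a b : V} (h : a ≤ b) : -b ≤ -a := by
  have := S.add_le_add_r h (-a + -b)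
  simpa [add_comm, add_left_comm] using this

lemma sub_le_sub' {a b c d : V} (h1 : a ≤ b) (h2 : d ≤ c) : a - c ≤ b - d := by
  simpa [sub_eq_add_neg] using S.add_le_add'' h1 (S.neg_le_neg' h2)

lemma smul_le_smul'' {r : ℝ} (hr : 0 ≤ r) {a b : V} (h : a ≤ b) : r • a ≤ r • b :=
  S.smul_le_smul' r a b hr h

lemma smul_nonneg' {r : ℝ} (hr : 0 ≤ r) {a : V} (h : 0 ≤ a) : 0 ≤ r • a := by
  simpa using S.smul_le_smul'' hr h

lemma smul_le_smul_scalar {r s : ℝ} (h : r ≤ s) {a : V} (ha : 0 ≤ a) : r • a ≤ s • a := by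
  have h1 : 0 ≤ (s - r) • a := S.smul_nonneg' (by linarith) ha
  have h2 := S.add_le_add_r h1 (r • a)
  have h3 : (s - r) • a + r • a = s • a := by rw [← add_smul]; ring_nf
  rw [zero_add, h3] at h2; exact h2

lemma one_nonneg : (0 : V) ≤ S.unit := ((S.eff_iff _).1 S.eff_unit).1

lemma eff_zero : S.Eff 0 := (S.eff_iff _).2 ⟨le_rfl, S.one_nonneg⟩

lemma eff_nonneg {a : V} (h : S.Eff a) : 0 ≤ a := ((S.eff_iff a).1 h).1

lemma eff_le_one {a : V} (h : S.Eff a) : a ≤ S.unit := ((S.eff_iff a).1 h).2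

lemma eff_mk {a : V} (h1 : 0 ≤ a) (h2 : a ≤ S.unit) : S.Eff a := (S.eff_iff a).2 ⟨h1, h2⟩

lemma eff_compl {a : V} (h : S.Eff a) : S.Eff (S.unit - a) :=
  S.eff_mk (S.sub_nonneg' (S.eff_le_one h)) (by simpa using S.sub_le_sub' le_rfl (S.eff_nonneg h))

lemma eff_sub {a b : V} (ha : S.Eff a) (hb : S.Eff b) (h : a ≤ b) : S.Eff (b - a) :=
  S.eff_mk (S.sub_nonneg' h)
    (le_trans (S.sub_le_sub' (S.eff_le_one hb) (S.eff_nonneg ha)) (by simp))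

lemma eff_of_le {a b : V} (h0 : 0 ≤ a) (hb : S.Eff b) (h : a ≤ b) : S.Eff a :=
  S.eff_mk h0 (le_trans h (S.eff_le_one hb))

lemma eff_smul {t : ℝ} (h0 : 0 ≤ t) (h1 : t ≤ 1) {a : V} (ha : S.Eff a) : S.Eff (t • a) :=
  S.eff_of_le (S.smul_nonneg' h0 (S.eff_nonneg ha)) ha
    (by simpa using S.smul_le_smul_scalar h1 (S.eff_nonneg ha))

/-! ### Norm lemmas -/

lemma normSet_nonempty (a : V) :
    Set.Nonempty {r : ℝ | 0 ≤ r ∧ -(r • S.unit) ≤ a ∧ a ≤ r • S.unit} := by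
  obtain ⟨n, h1, h2⟩ := S.strong a
  exact ⟨n, by positivity, h1, h2⟩

lemma normSet_bddBelow (a : V) :
    BddBelow {r : ℝ | 0 ≤ r ∧ -(r • S.unit) ≤ a ∧ a ≤ r • S.unit} :=
  ⟨0, fun r hr => hr.1⟩

lemma norm_le_of {a : V} {r : ℝ} (h0 : 0 ≤ r) (h1 : -(r • S.unit) ≤ a) (h2 : a ≤ r • S.unit) :
    ‖a‖ ≤ r := by
  rw [S.norm_def]
  exact csInf_le (S.normSet_bddBelow a) ⟨h0, h1, h2⟩

lemma arch_le {a b : V} (h : ∀ ε : ℝ, 0 < ε → a ≤ b + ε • S.unit) : a ≤ b := by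
  have key : a - b ≤ 0 := by
    apply S.arch
    intro n
    have hε : (0:ℝ) < ((n : ℝ) + 1)⁻¹ := by positivity
    have := S.add_le_add_r (h _ hε) (-b)
    simpa [add_comm, add_left_comm, sub_eq_add_neg] using this
  exact S.le_of_sub_nonneg (by simpa using S.neg_le_neg' key)

lemma le_norm_smul (a : V) : a ≤ ‖a‖ • S.unit := by
  apply S.arch_le
  intro ε hε
  have hlt : ∃ r ∈ {r : ℝ | 0 ≤ r ∧ -(r • S.unit) ≤ a ∧ a ≤ r • S.unit}, r < ‖a‖ + ε := by
    apply exists_lt_of_csInf_lt (S.normSet_nonempty a)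
    rw [← S.norm_def]; linarith
  obtain ⟨r, hr, hrlt⟩ := hlt
  calc a ≤ r • S.unit := hr.2.2
    _ ≤ (‖a‖ + ε) • S.unit := S.smul_le_smul_scalar hrlt.le S.one_nonneg
    _ = ‖a‖ • S.unit + ε • S.unit := by rw [add_smul]

lemma neg_norm_smul_le (a : V) : -(‖a‖ • S.unit) ≤ a := by
  have := S.le_norm_smul (-a)
  rw [norm_neg] at this
  simpa using S.neg_le_neg' this

lemma eff_norm_le_one {a : V} (h : S.Eff a) : ‖a‖ ≤ 1 := by
  apply S.norm_le_of zero_le_one _ (by simpa using S.eff_le_one h)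
  have h1 : -S.unit ≤ (0:V) := by simpa using S.neg_le_neg' S.one_nonneg
  have := le_trans h1 (S.eff_nonneg h)
  simpa using this

lemma norm_le_of_le_smul {a : V} {r : ℝ} (h0 : 0 ≤ a) (hr : 0 ≤ r) (h : a ≤ r • S.unit) :
    ‖a‖ ≤ r := by
  apply S.norm_le_of hr _ h
  exact le_trans (by simpa using S.neg_le_neg' (S.smul_nonneg' hr S.one_nonneg)) h0

lemma norm_mono_pos {a b : V} (h0 : 0 ≤ a) (h : a ≤ b) : ‖a‖ ≤ ‖b‖ :=
  S.norm_le_of_le_smul h0 (norm_nonneg b) (le_trans h (S.le_norm_smul b))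

lemma le_smul_of_norm_lt {a : V} {r : ℝ} (h : ‖a‖ < r) : a ≤ r • S.unit :=
  le_trans (S.le_norm_smul a) (S.smul_le_smul_scalar h.le S.one_nonneg)

lemma isClosed_nonneg : IsClosed {x : V | 0 ≤ x} := by
  apply IsSeqClosed.isClosed
  intro f x hf hx
  show (0:V) ≤ x
  apply S.arch_le
  intro ε hε
  obtain ⟨n, hn⟩ := (Metric.tendsto_atTop.1 hx) ε hε
  have hd : ‖x - f n‖ < ε := by
    have := hn n le_rfl; rwa [dist_comm, dist_eq_norm] at this
  have h1 : -(ε • S.unit) ≤ x - f n :=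
    le_trans (S.neg_le_neg' (S.smul_le_smul_scalar hd.le S.one_nonneg)) (S.neg_norm_smul_le _)
  have h2 : (0:V) ≤ x - f n + ε • S.unit := by
    have := S.add_le_add_r h1 (ε • S.unit); simpa using this
  have h3 := S.add_le_add'' (hf n) h2
  rw [zero_add] at h3
  exact le_trans h3 (le_of_eq (by abel))

lemma isClosed_le_set (b : V) : IsClosed {x : V | x ≤ b} := by
  have : {x : V | x ≤ b} = (fun x => b - x) ⁻¹' {x : V | 0 ≤ x} := by
    ext x; simp only [Set.mem_setOf_eq, Set.mem_preimage]
    constructor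
    · exact fun h => S.sub_nonneg' h
    · intro h; have := S.le_of_sub_nonneg h; exact this
  rw [this]
  exact S.isClosed_nonneg.preimage (by continuity)

lemma isClosed_eff : IsClosed {x : V | S.Eff x} := by
  have : {x : V | S.Eff x} = {x : V | 0 ≤ x} ∩ {x : V | x ≤ S.unit} := by
    ext x; simp [S.eff_iff]
  rw [this]
  exact S.isClosed_nonneg.inter (S.isClosed_le_set _)

lemma le_of_tendsto_sequence {f : ℕ → V} {x b : V} (hx : Filter.Tendsto f Filter.atTop (nhds x))
    (hf : ∀ n, f n ≤ b) : x ≤ b :=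
  (S.isClosed_le_set b).mem_of_tendsto hx (Filter.Eventually.of_forall hf)

lemma ge_of_tendsto_sequence {f : ℕ → V} {x b : V} (hx : Filter.Tendsto f Filter.atTop (nhds x))
    (hf : ∀ n, b ≤ f n) : b ≤ x := by
  have hc : IsClosed {y : V | b ≤ y} := by
    have : {y : V | b ≤ y} = (fun y => y - b) ⁻¹' {y : V | 0 ≤ y} := by
      ext y; simp only [Set.mem_setOf_eq, Set.mem_preimage]
      exact ⟨fun h => S.sub_nonneg' h, fun h => S.le_of_sub_nonneg h⟩
    rw [this]
    exact S.isClosed_nonneg.preimage (by continuity)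
  exact hc.mem_of_tendsto hx (Filter.Eventually.of_forall hf)

end SPS

namespace SPS

variable {V : Type*} [NormedAddCommGroup V] [NormedSpace ℝ V] [PartialOrder V] (S : SPS V)

include S

/-! ### Basic product lemmas -/

lemma eff_add_of_le {a b : V} (ha : S.Eff a) (hb : S.Eff b) (h : a + b ≤ S.unit) :
    S.Eff (a + b) :=
  S.eff_mk (by simpa using S.add_le_add'' (S.eff_nonneg ha) (S.eff_nonneg hb)) h

lemma seq_zero {a : V} (ha : S.Eff a) : S.seq a 0 = 0 := by
  have h := S.s1 a 0 0 ha S.eff_zero S.eff_zero (by simpa using S.eff_zero)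
  rw [add_zero] at h
  have := congrArg (fun x => x - S.seq a 0) h
  simpa using this.symm

lemma zero_seq {a : V} (ha : S.Eff a) : S.seq 0 a = 0 :=
  S.s4 a 0 ha S.eff_zero (S.seq_zero ha)

lemma seq_one {a : V} (ha : S.Eff a) : S.seq a S.unit = a := by
  have hc : S.seq a a = S.seq a a := rfl
  have h1 : S.seq a (S.unit - a) = S.seq (S.unit - a) a := S.s6a a a ha ha hc
  have h2 : S.seq a (a + (S.unit - a)) = S.seq (a + (S.unit - a)) a :=
    S.s6b a a (S.unit - a) ha ha (S.eff_compl ha) (by simpa using S.eff_unit) hc h1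
  have h3 : a + (S.unit - a) = S.unit := by abel
  rw [h3] at h2
  rw [h2, S.s3 a ha]

lemma seq_sub {a b c : V} (ha : S.Eff a) (hb : S.Eff b) (hc : S.Eff c) (h : b ≤ c) :
    S.seq a (c - b) = S.seq a c - S.seq a b := by
  have h1 := S.s1 a (c - b) b ha (S.eff_sub hb hc h) hb (by simpa using hc)
  rw [sub_add_cancel] at h1
  rw [h1]; abel

lemma seq_nonneg {a b : V} (ha : S.Eff a) (hb : S.Eff b) : 0 ≤ S.seq a b :=
  S.eff_nonneg (S.seq_eff a b ha hb)

lemma seq_mono {a b c : V} (ha : S.Eff a) (hb : S.Eff b) (hc : S.Eff c) (h : b ≤ c) :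
    S.seq a b ≤ S.seq a c := by
  have h1 := S.seq_sub ha hb hc h
  have h2 : 0 ≤ S.seq a c - S.seq a b := h1 ▸ S.seq_nonneg ha (S.eff_sub hb hc h)
  exact S.le_of_sub_nonneg h2

lemma seq_le_left {a b : V} (ha : S.Eff a) (hb : S.Eff b) : S.seq a b ≤ a := by
  have := S.seq_mono ha hb S.eff_unit (S.eff_le_one hb)
  rwa [S.seq_one ha] at this

lemma seq_compl_cancel {a b : V} (ha : S.Eff a) (hb : S.Eff b) :
    S.seq a (S.unit - b) = a - S.seq a b := by
  have := S.seq_sub ha hb S.eff_unit (S.eff_le_one hb)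
  rwa [S.seq_one ha] at this

/-! ### Homogeneity in the second argument -/

lemma seq_nsmul {a z : V} (ha : S.Eff a) (hz : S.Eff z) :
    ∀ m : ℕ, S.Eff ((m : ℝ) • z) → S.seq a ((m : ℝ) • z) = (m : ℝ) • S.seq a z := by
  intro m
  induction m with
  | zero => intro _; simpa using S.seq_zero ha
  | succ k ih =>
    intro hm
    have hkz : S.Eff ((k : ℝ) • z) := by
      apply S.eff_of_le (S.smul_nonneg' (by positivity) (S.eff_nonneg hz)) hm
      exact S.smul_le_smul_scalar (by exact_mod_cast Nat.le_succ k) (S.eff_nonneg hz)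
    have hsplit : ((k+1 : ℕ) : ℝ) • z = (k : ℝ) • z + z := by
      push_cast; rw [add_smul, one_smul]
    rw [hsplit]
    rw [S.s1 a _ z ha hkz hz (hsplit ▸ hm), ih hkz]
    push_cast; rw [add_smul, one_smul]

lemma eq_zero_of_pm_small {d : V}
    (h : ∀ n : ℕ, d ≤ ((n:ℝ)+1)⁻¹ • S.unit ∧ -d ≤ ((n:ℝ)+1)⁻¹ • S.unit) : d = 0 := by
  have h1 : d ≤ 0 := S.arch d (fun n => (h n).1)
  have h2 : -d ≤ 0 := S.arch (-d) (fun n => (h n).2)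
  have h3 : 0 ≤ d := by simpa using S.neg_le_neg' h2
  exact le_antisymm h1 h3

lemma seq_smul {a y : V} (ha : S.Eff a) (hy : S.Eff y) {t : ℝ} (h0 : 0 ≤ t) (h1 : t ≤ 1) :
    S.seq a (t • y) = t • S.seq a y := by
  apply sub_eq_zero.1
  apply S.eq_zero_of_pm_small
  intro n
  set N : ℝ := (n : ℝ) + 1 with hN
  have hNpos : (0:ℝ) < N := by positivity
  have hNcast : ((n + 1 : ℕ) : ℝ) = N := by push_cast; rfl
  set m : ℕ := ⌊t * N⌋₊ with hm
  have hmle : (m : ℝ) ≤ t * N := Nat.floor_le (by positivity)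
  have hmlt : t * N < (m : ℝ) + 1 := Nat.lt_floor_add_one _
  have hmN : (m : ℝ) ≤ N := le_trans hmle (by nlinarith)
  set z : V := N⁻¹ • y with hz
  have hzeff : S.Eff z := S.eff_smul (by positivity) (by rw [inv_le_one_iff₀]; right; linarith) hy
  set w : V := S.seq a z with hw
  have hweff : S.Eff w := S.seq_eff a z ha hzeff
  have hwn : 0 ≤ w := S.eff_nonneg hweff
  -- w ≤ N⁻¹ • unit
  have hzle : z ≤ N⁻¹ • S.unit := S.smul_le_smul'' (by positivity) (S.eff_le_one hy)
  have hNinv_eff : S.Eff (N⁻¹ • S.unit) :=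
    S.eff_smul (by positivity) (by rw [inv_le_one_iff₀]; right; linarith) S.eff_unit
  have hNz : S.seq a (N⁻¹ • S.unit) = N⁻¹ • a := by
    have hfull : ((n+1 : ℕ) : ℝ) • (N⁻¹ • S.unit) = S.unit := by
      rw [hNcast, smul_smul]; field_simp; rw [one_smul]
    have := S.seq_nsmul ha hNinv_eff (n+1) (by rw [hfull]; exact S.eff_unit)
    rw [hfull, S.seq_one ha, hNcast] at this
    have h2 := congrArg (fun x => N⁻¹ • x) this
    rw [smul_smul, inv_mul_cancel₀ (ne_of_gt hNpos), one_smul] at h2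
    exact h2.symm
  have hwle : w ≤ N⁻¹ • S.unit := by
    calc w ≤ S.seq a (N⁻¹ • S.unit) := S.seq_mono ha hzeff hNinv_eff hzle
      _ = N⁻¹ • a := hNz
      _ ≤ N⁻¹ • S.unit := S.smul_le_smul'' (by positivity) (S.eff_le_one ha)
  -- seq a y = N • w
  have hNzy : (N : ℝ) • z = y := by rw [hz, smul_smul]; field_simp; rw [one_smul]
  have hay : S.seq a y = N • w := by
    have := S.seq_nsmul ha hzeff (n+1) (by rw [hNcast, hNzy]; exact hy)
    rw [hNcast, hNzy] at this
    rw [this]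
  have hmz_eff : S.Eff ((m:ℝ) • z) := by
    rw [hz, smul_smul]
    apply S.eff_smul (by positivity) _ hy
    rw [mul_inv_le_iff₀ hNpos]; nlinarith
  have hmz : S.seq a ((m:ℝ) • z) = (m:ℝ) • w := S.seq_nsmul ha hzeff m hmz_eff
  have htyeff : S.Eff (t • y) := S.eff_smul h0 h1 hy
  -- lower bound : m • w ≤ seq a (t • y)
  have hlow : (m:ℝ) • w ≤ S.seq a (t • y) := by
    rw [← hmz]
    apply S.seq_mono ha hmz_eff htyeff
    have : (m:ℝ) • z = ((m:ℝ) * N⁻¹) • y := by rw [hz, smul_smul]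
    rw [this]
    apply S.smul_le_smul_scalar _ (S.eff_nonneg hy)
    rw [mul_inv_le_iff₀ hNpos]; nlinarith
  -- upper bound with m' = min (m+1) (n+1)
  set m' : ℕ := min (m+1) (n+1) with hm'
  have hm'le : (m':ℝ) ≤ (m:ℝ) + 1 := by
    have : m' ≤ m + 1 := min_le_left _ _
    exact_mod_cast this
  have hm'N : (m':ℝ) ≤ N := by
    have : m' ≤ n + 1 := min_le_right _ _
    rw [← hNcast]; exact_mod_cast this
  have htm' : t * N ≤ (m':ℝ) := by
    rcases le_or_gt (m+1) (n+1) with h | h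
    · have : m' = m + 1 := min_eq_left h
      rw [this]; push_cast; linarith
    · have : m' = n + 1 := min_eq_right h.le
      rw [this, hNcast]; nlinarith
  have hm'z_eff : S.Eff ((m':ℝ) • z) := by
    rw [hz, smul_smul]
    apply S.eff_smul (by positivity) _ hy
    rw [mul_inv_le_iff₀ hNpos] <;> nlinarith
  have hm'z : S.seq a ((m':ℝ) • z) = (m':ℝ) • w := S.seq_nsmul ha hzeff m' hm'z_eff
  have hhigh : S.seq a (t • y) ≤ (m':ℝ) • w := by
    rw [← hm'z]
    apply S.seq_mono ha htyeff hm'z_eff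
    have : (m':ℝ) • z = ((m':ℝ) * N⁻¹) • y := by rw [hz, smul_smul]
    rw [this]
    apply S.smul_le_smul_scalar _ (S.eff_nonneg hy)
    rw [le_mul_inv_iff₀ hNpos]; nlinarith
  have htw : t • S.seq a y = (t * N) • w := by rw [hay, smul_smul]
  constructor
  · calc S.seq a (t • y) - t • S.seq a y
        ≤ (m':ℝ) • w - t • S.seq a y := S.sub_le_sub' hhigh le_rfl
      _ = ((m':ℝ) - t * N) • w := by rw [htw, ← sub_smul]
      _ ≤ 1 • w := S.smul_le_smul_scalar (by nlinarith) hwn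
      _ = w := one_smul _ _
      _ ≤ N⁻¹ • S.unit := hwle
  · rw [neg_sub]
    calc t • S.seq a y - S.seq a (t • y)
        ≤ t • S.seq a y - (m:ℝ) • w := S.sub_le_sub' le_rfl hlow
      _ = ((t * N : ℝ) - m) • w := by rw [htw, ← sub_smul]
      _ ≤ 1 • w := S.smul_le_smul_scalar (by nlinarith) hwn
      _ = w := one_smul _ _
      _ ≤ N⁻¹ • S.unit := hwle

end SPS

namespace SPS

variable {V : Type*} [NormedAddCommGroup V] [NormedSpace ℝ V] [PartialOrder V] (S : SPS V)

include S

/-! ### Lipschitz continuity in the second argument -/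

lemma seq_lipschitz {a x y : V} (ha : S.Eff a) (hx : S.Eff x) (hy : S.Eff y) :
    ‖S.seq a x - S.seq a y‖ ≤ ‖x - y‖ := by
  -- suffices : for all ε > ‖x - y‖, seq a x - seq a y ≤ ε • unit (and symm.)
  have key : ∀ x y : V, S.Eff x → S.Eff y → ∀ ε : ℝ, ‖x - y‖ < ε →
      S.seq a x - S.seq a y ≤ ε • S.unit := by
    intro x y hx hy ε hε
    have hεpos : 0 < ε := lt_of_le_of_lt (norm_nonneg _) hε
    set t : ℝ := (1 + ε)⁻¹ with ht
    have htpos : 0 < t := by positivity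
    have htle : t ≤ 1 := by rw [ht, inv_le_one_iff₀]; right; linarith
    have hxy : x ≤ y + ε • S.unit := by
      have h1 : x - y ≤ ε • S.unit := le_trans (S.le_norm_smul (x - y))
        (S.smul_le_smul_scalar hε.le S.one_nonneg)
      have := S.add_le_add_r h1 y
      calc x = x - y + y := by abel
        _ ≤ ε • S.unit + y := this
        _ = y + ε • S.unit := by abel
    -- f := t • y + (1 - t) • unit is an effect and t • x ≤ f
    have htε : t * ε = 1 - t := by rw [ht]; field_simp; ring
    set f : V := t • y + (1 - t) • S.unit with hf
    have hty_eff : S.Eff (t • y) := S.eff_smul htpos.le htle hy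
    have h1t_eff : S.Eff ((1 - t) • S.unit) := S.eff_smul (by linarith) (by linarith) S.eff_unit
    have hfeff : S.Eff f := by
      apply S.eff_add_of_le hty_eff h1t_eff
      calc t • y + (1 - t) • S.unit ≤ t • S.unit + (1 - t) • S.unit :=
            S.add_le_add_r (S.smul_le_smul'' htpos.le (S.eff_le_one hy)) _
        _ = S.unit := by rw [← add_smul]; simp
    have htx_eff : S.Eff (t • x) := S.eff_smul htpos.le htle hx
    have htxf : t • x ≤ f := by
      calc t • x ≤ t • (y + ε • S.unit) := S.smul_le_smul'' htpos.le hxy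
        _ = t • y + (t * ε) • S.unit := by rw [smul_add, smul_smul]
        _ = f := by rw [htε]
    have hmono := S.seq_mono ha htx_eff hfeff htxf
    have hLHS : S.seq a (t • x) = t • S.seq a x := S.seq_smul ha hx htpos.le htle
    have hRHS : S.seq a f = t • S.seq a y + (1 - t) • a := by
      rw [hf, S.s1 a _ _ ha hty_eff h1t_eff (hf ▸ hfeff),
        S.seq_smul ha hy htpos.le htle, S.seq_smul ha S.eff_unit (by linarith) (by linarith),
        S.seq_one ha]
    rw [hLHS, hRHS] at hmono
    -- t • (seq a x - seq a y) ≤ (1-t) • a ≤ (1-t) • unit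
    have h2 : t • (S.seq a x - S.seq a y) ≤ (1 - t) • S.unit := by
      calc t • (S.seq a x - S.seq a y) = t • S.seq a x - t • S.seq a y := by
            rw [smul_sub]
        _ ≤ (1 - t) • a := by
            have := S.sub_le_sub' hmono (le_refl (t • S.seq a y))
            calc t • S.seq a x - t • S.seq a y
                ≤ t • S.seq a y + (1-t) • a - t • S.seq a y := this
              _ = (1-t) • a := by abel
        _ ≤ (1 - t) • S.unit := S.smul_le_smul'' (by linarith) (S.eff_le_one ha)
    have h3 := S.smul_le_smul'' (le_of_lt (inv_pos.2 htpos)) h2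
    rw [smul_smul, inv_mul_cancel₀ (ne_of_gt htpos), one_smul, smul_smul] at h3
    have : t⁻¹ * (1 - t) = ε := by rw [ht]; field_simp; ring
    rwa [this] at h3
  -- combine
  have h4 : ∀ ε : ℝ, ‖x - y‖ < ε → ‖S.seq a x - S.seq a y‖ ≤ ε := by
    intro ε hε
    have hεpos : 0 < ε := lt_of_le_of_lt (norm_nonneg _) hε
    have hu := key x y hx hy ε hε
    have hl := key y x hy hx ε (by rwa [norm_sub_rev])
    apply S.norm_le_of hεpos.le _ hu
    have := S.neg_le_neg' hl
    rw [neg_sub] at this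
    exact this
  by_contra hcon
  push_neg at hcon
  obtain ⟨ε, hε1, hε2⟩ := exists_between hcon
  exact absurd (h4 ε hε1) (not_le.2 hε2)

lemma tendsto_seq_snd {a : V} (ha : S.Eff a) {f : ℕ → V} {x : V}
    (hf : ∀ n, S.Eff (f n)) (hx : S.Eff x) (h : Filter.Tendsto f Filter.atTop (nhds x)) :
    Filter.Tendsto (fun n => S.seq a (f n)) Filter.atTop (nhds (S.seq a x)) := by
  rw [Metric.tendsto_atTop] at h ⊢
  intro ε hε
  obtain ⟨N, hN⟩ := h ε hε
  refine ⟨N, fun n hn => ?_⟩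
  have hlip := S.seq_lipschitz ha (hf n) hx
  have hN' := hN n hn
  rw [dist_eq_norm] at hN' ⊢
  exact lt_of_le_of_lt hlip hN'

lemma tendsto_seq_fst {b : V} (hb : S.Eff b) {f : ℕ → V} {x : V}
    (hf : ∀ n, S.Eff (f n)) (hx : S.Eff x) (h : Filter.Tendsto f Filter.atTop (nhds x)) :
    Filter.Tendsto (fun n => S.seq (f n) b) Filter.atTop (nhds (S.seq x b)) := by
  have hcont : ContinuousWithinAt (fun a => S.seq a b) {a : V | S.Eff a} x := S.s2 b hb x hx
  exact hcont.tendsto.comp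
    (tendsto_nhdsWithin_iff.mpr ⟨h, Filter.Eventually.of_forall hf⟩)

/-! ### Compatibility lemmas -/

lemma compat_refl (a : V) : S.seq a a = S.seq a a := rfl

lemma compat_compl {a b : V} (ha : S.Eff a) (hb : S.Eff b) (h : S.seq a b = S.seq b a) :
    S.seq a (S.unit - b) = S.seq (S.unit - b) a := S.s6a a b ha hb h

/-! ### Sharp effect lemmas -/

lemma sharp_unit : S.SharpI S.unit := ⟨S.eff_unit, S.s3 _ S.eff_unit⟩

lemma sharp_zero : S.SharpI 0 := ⟨S.eff_zero, S.seq_zero S.eff_zero⟩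

lemma sharp_seq_compl {p : V} (hp : S.SharpI p) : S.seq p (S.unit - p) = 0 := by
  rw [S.seq_compl_cancel hp.1 hp.1, hp.2, sub_self]

lemma sharp_compl {p : V} (hp : S.SharpI p) : S.SharpI (S.unit - p) := by
  refine ⟨S.eff_compl hp.1, ?_⟩
  have h1 : S.seq (S.unit - p) p = 0 :=
    S.s4 p (S.unit - p) hp.1 (S.eff_compl hp.1) (S.sharp_seq_compl hp)
  rw [S.seq_compl_cancel (S.eff_compl hp.1) hp.1, h1, sub_zero]

/-- L6 : if `x ≤ 1 - p` then `p ∘ x = 0`. -/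
lemma seq_eq_zero_of_le_compl {p x : V} (hp : S.SharpI p) (hx : S.Eff x)
    (h : x ≤ S.unit - p) : S.seq p x = 0 := by
  have h1 : S.seq p x ≤ S.seq p (S.unit - p) :=
    S.seq_mono hp.1 hx (S.eff_compl hp.1) h
  rw [S.sharp_seq_compl hp] at h1
  exact le_antisymm h1 (S.seq_nonneg hp.1 hx)

/-- L7 : if `p` is sharp and `x ≤ p` then `p ∘ x = x ∘ p = x`. -/
lemma seq_of_le_sharp {p x : V} (hp : S.SharpI p) (hx : S.Eff x) (h : x ≤ p) :
    S.seq p x = x ∧ S.seq x p = x := by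
  have hp' : S.SharpI (S.unit - p) := S.sharp_compl hp
  have hle : x ≤ S.unit - (S.unit - p) := by simpa using h
  have h1 : S.seq (S.unit - p) x = 0 := S.seq_eq_zero_of_le_compl hp' hx hle
  have h2 : S.seq x (S.unit - p) = 0 :=
    S.s4 (S.unit - p) x (S.eff_compl hp.1) hx h1
  have h3 : S.seq x p = x := by
    have := S.seq_compl_cancel hx hp.1
    rw [h2] at this
    have := congrArg (fun z => x - z) this
    simpa using this.symm
  refine ⟨?_, h3⟩
  -- compatibility: x | (1 - p) (both zero), so x | p by s6a
  have hcompat : S.seq x (S.unit - p) = S.seq (S.unit - p) x := by rw [h1, h2]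
  have := S.compat_compl hx (S.eff_compl hp.1) hcompat
  have heq : S.unit - (S.unit - p) = p := by abel
  rw [heq] at this
  rw [← this, h3]

/-- L7' : if `p ∘ x = 0` then `x ≤ 1 - p`. -/
lemma le_compl_of_seq_eq_zero {p x : V} (hp : S.SharpI p) (hx : S.Eff x)
    (h : S.seq p x = 0) : x ≤ S.unit - p := by
  have h2 : S.seq x p = 0 := S.s4 p x hp.1 hx h
  have hcompat : S.seq x p = S.seq p x := by rw [h, h2]
  have h3 := S.compat_compl hx hp.1 hcompat
  have h4 : S.seq x (S.unit - p) = x := by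
    rw [S.seq_compl_cancel hx hp.1, h2, sub_zero]
  rw [h4] at h3
  have := S.seq_le_left (S.eff_compl hp.1) hx
  rw [← h3] at this
  exact this

/-- L12 : if `c` is sharp and `c ≤ a` then `a ∘ c = c ∘ a = c`. -/
lemma seq_of_sharp_le {c a : V} (hc : S.SharpI c) (ha : S.Eff a) (h : c ≤ a) :
    S.seq a c = c ∧ S.seq c a = c := by
  have h1 : S.unit - a ≤ S.unit - c := S.sub_le_sub' le_rfl h
  have h2 : S.seq c (S.unit - a) = 0 := by
    have := S.seq_mono hc.1 (S.eff_compl ha) (S.eff_compl hc.1) h1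
    rw [S.sharp_seq_compl hc] at this
    exact le_antisymm this (S.seq_nonneg hc.1 (S.eff_compl ha))
  have h3 : S.seq c a = c := by
    rw [S.seq_compl_cancel hc.1 ha] at h2
    exact (sub_eq_zero.1 h2).symm
  have h4 : S.seq (S.unit - a) c = 0 := S.s4 c (S.unit - a) hc.1 (S.eff_compl ha) h2
  have hcompat : S.seq c (S.unit - a) = S.seq (S.unit - a) c := by rw [h2, h4]
  have h5 := S.compat_compl hc.1 (S.eff_compl ha) hcompat
  have heq : S.unit - (S.unit - a) = a := by abel
  rw [heq, h3] at h5
  exact ⟨h5.symm, h3⟩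

/-- sharp difference : if `p ≤ u` are both sharp then `u - p` is sharp and `p ∘ (u-p) = 0`. -/
lemma sharp_sub {p u : V} (hp : S.SharpI p) (hu : S.SharpI u) (h : p ≤ u) :
    S.SharpI (u - p) ∧ S.seq p (u - p) = 0 := by
  have hq_eff : S.Eff (u - p) := S.eff_sub hp.1 hu.1 h
  have hup := S.seq_of_le_sharp hu hp.1 h   -- u∘p = p, p∘u = p
  have hpq : S.seq p (u - p) = 0 := by
    rw [S.seq_sub hp.1 hp.1 hu.1 h, hup.2, hp.2, sub_self]
  have hqp : S.seq (u - p) p = 0 := S.s4 p (u - p) hp.1 hq_eff hpq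
  have hqle : u - p ≤ S.unit - p := S.le_compl_of_seq_eq_zero hp hq_eff hpq
  -- q ≤ u so u∘q = q∘u = q
  have hqleu : u - p ≤ u := by
    have := S.sub_le_sub' (le_refl u) (S.eff_nonneg hp.1)
    simpa using this
  have hq := S.seq_of_le_sharp hu hq_eff hqleu
  have hqq : S.seq (u - p) (u - p) = u - p := by
    rw [S.seq_sub hq_eff hp.1 hu.1 h, hqp, sub_zero, hq.2]
  exact ⟨⟨hq_eff, hqq⟩, hpq⟩

end SPS

namespace SPS

variable {V : Type*} [NormedAddCommGroup V] [NormedSpace ℝ V] [PartialOrder V]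

/-- Iterated sequential powers : `pw b n = b ∘ (b ∘ (⋯ ∘ unit))`. -/
def pw (S : SPS V) (b : V) : ℕ → V
  | 0 => S.unit
  | n + 1 => S.seq b (S.pw b n)

variable (S : SPS V)

lemma pw_zero (b : V) : S.pw b 0 = S.unit := rfl

lemma pw_succ (b : V) (n : ℕ) : S.pw b (n + 1) = S.seq b (S.pw b n) := rfl

lemma eff_pw {b : V} (hb : S.Eff b) : ∀ n, S.Eff (S.pw b n)
  | 0 => S.eff_unit
  | n + 1 => S.seq_eff _ _ hb (eff_pw hb n)

lemma pw_succ_le {b : V} (hb : S.Eff b) : ∀ n, S.pw b (n + 1) ≤ S.pw b n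
  | 0 => by
      rw [pw_succ, pw_zero, S.seq_one hb]; exact S.eff_le_one hb
  | n + 1 => by
      rw [pw_succ, pw_succ]
      exact S.seq_mono hb (S.eff_pw hb (n+1)) (S.eff_pw hb n) (pw_succ_le hb n)

lemma pw_le_pw {b : V} (hb : S.Eff b) {m n : ℕ} (h : m ≤ n) : S.pw b n ≤ S.pw b m := by
  induction n with
  | zero => simp_all
  | succ k ih =>
    rcases Nat.lt_or_ge m (k+1) with h' | h'
    · exact le_trans (S.pw_succ_le hb k) (ih (Nat.lt_succ_iff.1 h'))
    · have : m = k + 1 := le_antisymm h h'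
      rw [this]

lemma compat_pw {b : V} (hb : S.Eff b) : ∀ n, S.seq b (S.pw b n) = S.seq (S.pw b n) b
  | 0 => by rw [pw_zero, S.seq_one hb, S.s3 b hb]
  | n + 1 => by
      rw [pw_succ]
      exact S.s7 b b (S.pw b n) hb hb (S.eff_pw hb n) rfl (compat_pw hb n)

lemma pw_add {b : V} (hb : S.Eff b) : ∀ m n, S.seq (S.pw b m) (S.pw b n) = S.pw b (m + n)
  | 0, n => by rw [pw_zero, S.s3 _ (S.eff_pw hb n), Nat.zero_add]
  | m + 1, n => by
      rw [pw_succ]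
      have h5 := S.s5 b (S.pw b m) (S.pw b n) hb (S.eff_pw hb m) (S.eff_pw hb n)
        (S.compat_pw hb m)
      rw [← h5, pw_add hb m n, ← pw_succ]
      congr 1
      omega

variable [FiniteDimensional ℝ V]

lemma isCompact_eff : IsCompact {x : V | S.Eff x} := by
  have hsub : {x : V | S.Eff x} ⊆ Metric.closedBall 0 1 := by
    intro x hx
    simp only [Metric.mem_closedBall, dist_zero_right]
    exact S.eff_norm_le_one hx
  exact (isCompact_closedBall (0:V) 1).of_isClosed_subset S.isClosed_eff hsub

lemma exists_tendsto_of_antitone {f : ℕ → V} (hf : ∀ n, S.Eff (f n))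
    (hdec : ∀ m n, m ≤ n → f n ≤ f m) :
    ∃ p, S.Eff p ∧ Filter.Tendsto f Filter.atTop (nhds p) ∧ ∀ n, p ≤ f n := by
  obtain ⟨p, hpmem, φ, hφ, hconv⟩ := (S.isCompact_eff).tendsto_subseq hf
  refine ⟨p, hpmem, ?_, ?_⟩
  · -- full convergence
    have hple : ∀ n, p ≤ f n := by
      intro n
      apply S.le_of_tendsto_sequence (hconv.comp (Filter.tendsto_add_atTop_nat n))
      intro k
      exact hdec n (φ (k + n)) (le_trans (Nat.le_add_left n k) (hφ.le_apply))
    rw [Metric.tendsto_atTop]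
    intro ε hε
    rw [Metric.tendsto_atTop] at hconv
    obtain ⟨K, hK⟩ := hconv ε hε
    refine ⟨φ K, fun n hn => ?_⟩
    have h1 : 0 ≤ f n - p := S.sub_nonneg' (hple n)
    have h2 : f n - p ≤ f (φ K) - p := S.sub_le_sub' (hdec (φ K) n hn) le_rfl
    have h3 : ‖f n - p‖ ≤ ‖f (φ K) - p‖ := S.norm_mono_pos h1 h2
    have h4 := hK K le_rfl
    rw [dist_eq_norm] at h4 ⊢
    exact lt_of_le_of_lt h3 h4
  · intro n
    apply S.le_of_tendsto_sequence (hconv.comp (Filter.tendsto_add_atTop_nat n))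
    intro k
    exact hdec n (φ (k + n)) (le_trans (Nat.le_add_left n k) (hφ.le_apply))

/-- The spectral-top projection: limit of the iterated powers of `b`. -/
lemma limit_proj {b : V} (hb : S.Eff b) :
    ∃ p, S.SharpI p ∧ p ≤ b ∧ S.seq b p = p ∧ S.seq b p = S.seq p b ∧
      Filter.Tendsto (S.pw b) Filter.atTop (nhds p) := by
  obtain ⟨p, hpeff, hconv, hple⟩ := S.exists_tendsto_of_antitone (S.eff_pw hb)
    (fun m n h => S.pw_le_pw hb h)
  have hpw_eff := S.eff_pw hb
  have hshift : Filter.Tendsto (fun n => S.pw b (n + 1)) Filter.atTop (nhds p) :=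
    hconv.comp (Filter.tendsto_add_atTop_nat 1)
  have hbp : S.seq b p = p := by
    have h1 : Filter.Tendsto (fun n => S.seq b (S.pw b n)) Filter.atTop (nhds (S.seq b p)) :=
      S.tendsto_seq_snd hb hpw_eff hpeff hconv
    have h2 : (fun n => S.seq b (S.pw b n)) = fun n => S.pw b (n + 1) := rfl
    rw [h2] at h1
    exact tendsto_nhds_unique h1 hshift
  have hcompat : S.seq b p = S.seq p b := by
    have h1 : Filter.Tendsto (fun n => S.seq b (S.pw b n)) Filter.atTop (nhds (S.seq b p)) :=
      S.tendsto_seq_snd hb hpw_eff hpeff hconv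
    have h2 : Filter.Tendsto (fun n => S.seq (S.pw b n) b) Filter.atTop (nhds (S.seq p b)) :=
      S.tendsto_seq_fst hb hpw_eff hpeff hconv
    have h3 : (fun n => S.seq b (S.pw b n)) = fun n => S.seq (S.pw b n) b := by
      funext n; exact S.compat_pw hb n
    rw [h3] at h1
    exact tendsto_nhds_unique h1 h2
  have hsharp : S.seq p p = p := by
    -- seq (pw n) (pw n) = pw (n + n) → p, and also → seq p p
    have hdiag : Filter.Tendsto (fun n => S.pw b (n + n)) Filter.atTop (nhds p) :=
      hconv.comp (Filter.tendsto_atTop_mono (fun n => Nat.le_add_left n n) Filter.tendsto_id)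
    have heqd : (fun n => S.pw b (n + n)) = fun n => S.seq (S.pw b n) (S.pw b n) := by
      funext n; rw [S.pw_add hb n n]
    rw [heqd] at hdiag
    have h2 : Filter.Tendsto (fun n => S.seq (S.pw b n) (S.pw b n)) Filter.atTop
        (nhds (S.seq p p)) := by
      rw [Metric.tendsto_atTop]
      intro ε hε
      have h3 : Filter.Tendsto (fun n => S.seq (S.pw b n) p) Filter.atTop
          (nhds (S.seq p p)) := S.tendsto_seq_fst hpeff hpw_eff hpeff hconv
      rw [Metric.tendsto_atTop] at h3 hconv
      obtain ⟨N1, hN1⟩ := h3 (ε/2) (by linarith)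
      obtain ⟨N2, hN2⟩ := hconv (ε/2) (by linarith)
      refine ⟨max N1 N2, fun n hn => ?_⟩
      have ha := hN1 n (le_trans (le_max_left _ _) hn)
      have hbn := hN2 n (le_trans (le_max_right _ _) hn)
      have hlip := S.seq_lipschitz (hpw_eff n) (hpw_eff n) hpeff
      calc dist (S.seq (S.pw b n) (S.pw b n)) (S.seq p p)
          ≤ dist (S.seq (S.pw b n) (S.pw b n)) (S.seq (S.pw b n) p)
            + dist (S.seq (S.pw b n) p) (S.seq p p) := dist_triangle _ _ _
        _ < ε/2 + ε/2 := by
            apply add_lt_add _ ha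
            rw [dist_eq_norm]
            exact lt_of_le_of_lt hlip (by rwa [← dist_eq_norm])
        _ = ε := by ring
    exact (tendsto_nhds_unique hdiag h2).symm
  exact ⟨p, ⟨hpeff, hsharp⟩, by simpa [pw_succ, pw_zero, S.seq_one hb] using hple 1,
    hbp, hcompat, hconv⟩

/-- norm preservation : if `‖b‖ = 1` then the limit projection is nonzero. -/
lemma seq_self_norm {x : V} (hx : S.Eff x) : 2 * ‖x‖ - 1 ≤ ‖S.seq x x‖ := by
  have h1 : S.seq x (S.unit - x) ≤ S.unit - x := by
    rw [S.s6a x x hx hx rfl]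
    exact S.seq_le_left (S.eff_compl hx) hx
  have h2 : x - (S.unit - x) ≤ S.seq x x := by
    have h2' := S.sub_le_sub' (le_refl x) h1
    rw [S.seq_compl_cancel hx hx] at h2'
    exact le_trans h2' (le_of_eq (by abel))
  have h3 : (2:ℝ) • x ≤ (1 + ‖S.seq x x‖) • S.unit := by
    have h4 : S.seq x x ≤ ‖S.seq x x‖ • S.unit := S.le_norm_smul _
    have h5 := le_trans h2 h4
    have h6 := S.add_le_add_r h5 (S.unit - x + x)
    calc (2:ℝ) • x = x - (S.unit - x) + (S.unit - x + x) := by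
          rw [two_smul]; abel
      _ ≤ ‖S.seq x x‖ • S.unit + (S.unit - x + x) := h6
      _ = ‖S.seq x x‖ • S.unit + S.unit := by abel
      _ = (1 + ‖S.seq x x‖) • S.unit := by rw [add_smul, one_smul]; abel
  have h7 : ‖(2:ℝ) • x‖ ≤ 1 + ‖S.seq x x‖ :=
    S.norm_le_of_le_smul (S.smul_nonneg' (by norm_num) (S.eff_nonneg hx))
      (by positivity) h3
  rw [norm_smul] at h7
  simp only [Real.norm_ofNat] at h7
  linarith

lemma pw_norm_one {b : V} (hb : S.Eff b) (hnb : ‖b‖ = 1) : ∀ n, ‖S.pw b n‖ = 1 := by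
  have hpow : ∀ k, ‖S.pw b (2^k)‖ = 1 := by
    intro k
    induction k with
    | zero =>
      rw [pow_zero]
      show ‖S.seq b (S.pw b 0)‖ = 1
      rw [pw_zero, S.seq_one hb]; exact hnb
    | succ j ih =>
      have h1 : (2:ℕ)^(j+1) = 2^j + 2^j := by ring
      have h2 : S.pw b (2^(j+1)) = S.seq (S.pw b (2^j)) (S.pw b (2^j)) := by
        rw [h1, S.pw_add hb]
      have h3 := S.seq_self_norm (S.eff_pw hb (2^j))
      rw [ih] at h3
      have h4 := S.eff_norm_le_one (S.seq_eff _ _ (S.eff_pw hb (2^j)) (S.eff_pw hb (2^j)))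
      rw [h2]
      linarith
  intro n
  have h1 : n ≤ 2^n := Nat.le_of_lt (Nat.lt_two_pow_self)
  have h2 : S.pw b (2^n) ≤ S.pw b n := S.pw_le_pw hb h1
  have h3 : ‖S.pw b (2^n)‖ ≤ ‖S.pw b n‖ :=
    S.norm_mono_pos (S.eff_nonneg (S.eff_pw hb (2^n))) h2
  have h4 := S.eff_norm_le_one (S.eff_pw hb n)
  rw [hpow n] at h3
  linarith

end SPS

namespace SPS

variable {V : Type*} [NormedAddCommGroup V] [NormedSpace ℝ V] [PartialOrder V] (S : SPS V)

include S

lemma unit_smul_nonneg_pos {c : ℝ} (hu : S.unit ≠ 0) (hc : c < 0) (h : 0 ≤ c • S.unit) :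
    False := by
  have h1 : 0 ≤ ((-c)⁻¹) • (c • S.unit) :=
    S.smul_nonneg' (by rw [inv_nonneg]; linarith) h
  rw [smul_smul] at h1
  have h2 : (-c)⁻¹ * c = -1 := by
    rw [show (-c)⁻¹ * c = -((-c)⁻¹ * (-c)) by ring,
      inv_mul_cancel₀ (by linarith : (-c) ≠ 0)]
  rw [h2, neg_smul, one_smul] at h1
  have h3 : S.unit ≤ 0 := by simpa using S.neg_le_neg' h1
  exact hu (le_antisymm h3 S.one_nonneg)

lemma ubSet_nonempty (x : V) : Set.Nonempty {r : ℝ | x ≤ r • S.unit} := by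
  obtain ⟨n, _, h2⟩ := S.strong x
  exact ⟨n, h2⟩

lemma ubSet_bddBelow (hu : S.unit ≠ 0) (x : V) : BddBelow {r : ℝ | x ≤ r • S.unit} := by
  refine ⟨-‖x‖, fun r hr => ?_⟩
  by_contra hcon
  push_neg at hcon
  have h1 : -(‖x‖ • S.unit) ≤ r • S.unit := le_trans (S.neg_norm_smul_le x) hr
  have h2 : 0 ≤ (r + ‖x‖) • S.unit := by
    have := S.add_le_add_r h1 (‖x‖ • S.unit)
    calc (0:V) = -(‖x‖ • S.unit) + ‖x‖ • S.unit := by abel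
      _ ≤ r • S.unit + ‖x‖ • S.unit := this
      _ = (r + ‖x‖) • S.unit := by rw [add_smul]
  exact S.unit_smul_nonneg_pos hu (by linarith) h2

/-- The sublinear functional `N x = inf {r | x ≤ r • unit}`. -/
noncomputable def ub (x : V) : ℝ := sInf {r : ℝ | x ≤ r • S.unit}

lemma ub_le (hu : S.unit ≠ 0) {x : V} {r : ℝ} (h : x ≤ r • S.unit) : S.ub x ≤ r :=
  csInf_le (S.ubSet_bddBelow hu x) h

lemma le_ub_smul (hu : S.unit ≠ 0) (x : V) : x ≤ S.ub x • S.unit := by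
  apply S.arch_le
  intro ε hε
  obtain ⟨r, hr, hrlt⟩ := exists_lt_of_csInf_lt (S.ubSet_nonempty x)
    (show sInf {r : ℝ | x ≤ r • S.unit} < S.ub x + ε by rw [ub]; linarith)
  calc x ≤ r • S.unit := hr
    _ ≤ (S.ub x + ε) • S.unit := S.smul_le_smul_scalar hrlt.le S.one_nonneg
    _ = S.ub x • S.unit + ε • S.unit := by rw [add_smul]

lemma ub_mono (hu : S.unit ≠ 0) {x y : V} (h : x ≤ y) : S.ub x ≤ S.ub y :=
  S.ub_le hu (le_trans h (S.le_ub_smul hu y))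

lemma ub_add (hu : S.unit ≠ 0) (x y : V) : S.ub (x + y) ≤ S.ub x + S.ub y := by
  apply S.ub_le hu
  calc x + y ≤ S.ub x • S.unit + S.ub y • S.unit :=
        S.add_le_add'' (S.le_ub_smul hu x) (S.le_ub_smul hu y)
    _ = (S.ub x + S.ub y) • S.unit := by rw [add_smul]

lemma ub_smul (hu : S.unit ≠ 0) {c : ℝ} (hc : 0 < c) (x : V) : S.ub (c • x) = c * S.ub x := by
  apply le_antisymm
  · apply S.ub_le hu
    have := S.smul_le_smul'' hc.le (S.le_ub_smul hu x)
    rwa [smul_smul] at this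
  · have hx' := S.smul_le_smul'' (le_of_lt (inv_pos.2 hc)) (S.le_ub_smul hu (c • x))
    rw [smul_smul, inv_mul_cancel₀ (ne_of_gt hc), one_smul, smul_smul] at hx'
    have h := S.ub_le hu hx'
    calc c * S.ub x ≤ c * (c⁻¹ * S.ub (c • x)) := by
          exact mul_le_mul_of_nonneg_left h hc.le
      _ = S.ub (c • x) := by field_simp

lemma ub_zero (hu : S.unit ≠ 0) : S.ub 0 = 0 := by
  apply le_antisymm (S.ub_le hu (by simp))
  apply le_csInf (S.ubSet_nonempty 0)
  intro r hr
  by_contra hcon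
  push_neg at hcon
  exact S.unit_smul_nonneg_pos hu hcon hr

lemma ub_unit_le_one (hu : S.unit ≠ 0) : S.ub S.unit ≤ 1 :=
  S.ub_le hu (by rw [one_smul])

lemma exists_state {p : V} (hp : S.Eff p) (hpn : ‖p‖ = 1) :
    ∃ φ : V →ₗ[ℝ] ℝ, φ p = 1 ∧ ∀ x, S.Eff x → x ≤ S.unit - p → φ x = 0 := by
  have hp0 : p ≠ 0 := fun h => by simp [h] at hpn
  have hu : S.unit ≠ 0 := by
    intro h
    apply hp0
    exact le_antisymm (h ▸ S.eff_le_one hp) (S.eff_nonneg hp)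
  -- ub p = 1
  have hubp : S.ub p = 1 := by
    apply le_antisymm (S.ub_le hu (by simpa using S.eff_le_one hp))
    apply le_csInf (S.ubSet_nonempty p)
    intro r hr
    have hr0 : 0 ≤ r := by
      by_contra hcon
      push_neg at hcon
      exact S.unit_smul_nonneg_pos hu hcon (le_trans (S.eff_nonneg hp) hr)
    have : ‖p‖ ≤ r := S.norm_le_of_le_smul (S.eff_nonneg hp) hr0 hr
    rwa [hpn] at this
  -- the partial linear map on span {p}
  set f : V →ₗ.[ℝ] ℝ := LinearPMap.mkSpanSingleton p 1 hp0 with hf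
  have hfle : ∀ z : f.domain, f z ≤ S.ub z := by
    rintro ⟨z, hz⟩
    obtain ⟨c, hc⟩ := Submodule.mem_span_singleton.1 hz
    have hcmem : c • p ∈ Submodule.span ℝ {p} :=
      Submodule.smul_mem _ c (Submodule.mem_span_singleton_self p)
    have hzeq : (⟨z, hz⟩ : f.domain) = ⟨c • p, hcmem⟩ := Subtype.ext hc.symm
    rw [hzeq]
    have happ : f ⟨c • p, hcmem⟩ = c • (1:ℝ) := LinearPMap.mkSpanSingleton'_apply p 1 _ c _
    rw [happ, smul_eq_mul, mul_one]
    show c ≤ S.ub (c • p)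
    rcases lt_trichotomy c 0 with hneg | hzero | hpos
    · -- c < 0 : lower bound c on the set
      apply le_csInf (S.ubSet_nonempty _)
      intro r hr
      have h1 : c • S.unit ≤ c • p := by
        have h2 : (0:V) ≤ (-c) • (S.unit - p) :=
          S.smul_nonneg' (by linarith) (S.sub_nonneg' (S.eff_le_one hp))
        have h3 := S.add_le_add_r h2 (c • S.unit)
        rw [zero_add] at h3
        refine le_trans h3 (le_of_eq ?_)
        rw [smul_sub, neg_smul, neg_smul]
        abel
      have h4 : 0 ≤ (r - c) • S.unit := by
        have := le_trans h1 hr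
        have h5 := S.add_le_add_r this (-(c • S.unit))
        rw [add_neg_cancel] at h5
        refine le_trans h5 (le_of_eq ?_)
        rw [sub_smul]; abel
      by_contra hcon
      push_neg at hcon
      exact S.unit_smul_nonneg_pos hu (by linarith) h4
    · rw [hzero, zero_smul, S.ub_zero hu]
    · rw [S.ub_smul hu hpos, hubp, mul_one]
  obtain ⟨g, hg1, hg2⟩ := exists_extension_of_le_sublinear f S.ub
    (fun c hc x => S.ub_smul hu hc x) (S.ub_add hu) hfle
  have hgp : g p = 1 := by
    have := hg1 ⟨p, Submodule.mem_span_singleton_self p⟩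
    rw [this]
    exact LinearPMap.mkSpanSingleton_apply ℝ ℝ hp0 1
  refine ⟨g, hgp, ?_⟩
  intro x hx hxle
  have hg_nonneg : 0 ≤ g x := by
    have h1 : g (-x) ≤ S.ub (-x) := hg2 (-x)
    have h2 : S.ub (-x) ≤ 0 := S.ub_le hu
      (by rw [zero_smul]; simpa using S.neg_le_neg' (S.eff_nonneg hx))
    have := le_trans h1 h2
    rw [map_neg] at this
    linarith
  have hg_le : g x ≤ 0 := by
    have h1 : g (x + p) ≤ S.ub (x + p) := hg2 (x + p)
    have h2 : x + p ≤ S.unit := by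
      have := S.add_le_add_r hxle p
      calc x + p ≤ S.unit - p + p := this
        _ = S.unit := by abel
    have h3 : S.ub (x + p) ≤ S.ub S.unit := S.ub_mono hu h2
    have h4 := le_trans h1 (le_trans h3 (S.ub_unit_le_one hu))
    rw [map_add, hgp] at h4
    linarith
  linarith

end SPS

namespace SPS

variable {V : Type*} [NormedAddCommGroup V] [NormedSpace ℝ V] [PartialOrder V]
variable [FiniteDimensional ℝ V] (S : SPS V)

/-- The peeling step: extract the top spectral projection of a nonzero effect below `u`. -/
lemma peel {u a : V} (hu : S.SharpI u) (ha : S.Eff a) (hau : a ≤ u) (ha0 : a ≠ 0) :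
    ∃ p : V, S.SharpI p ∧ ‖p‖ = 1 ∧ p ≤ u ∧
      S.Eff (a - ‖a‖ • p) ∧ (a - ‖a‖ • p) ≤ u - p ∧
      S.seq a p = S.seq p a ∧ 0 < ‖a‖ ∧ ‖a‖ ≤ 1 := by
  set l : ℝ := ‖a‖ with hl
  have hlpos : 0 < l := norm_pos_iff.2 ha0
  have hl1 : l ≤ 1 := S.eff_norm_le_one ha
  set b : V := l⁻¹ • a with hb
  have hbeff : S.Eff b := by
    apply S.eff_mk (S.smul_nonneg' (by positivity) (S.eff_nonneg ha))
    have := S.smul_le_smul'' (le_of_lt (inv_pos.2 hlpos)) (S.le_norm_smul a)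
    rw [smul_smul, ← hl, inv_mul_cancel₀ (ne_of_gt hlpos), one_smul] at this
    exact this
  have hab : a = l • b := by rw [hb, smul_smul, mul_inv_cancel₀ (ne_of_gt hlpos), one_smul]
  have hbnorm : ‖b‖ = 1 := by
    rw [hb, norm_smul, norm_inv, Real.norm_eq_abs, abs_of_pos hlpos, ← hl]
    field_simp
  have hbu : b ≤ u := by
    have hua : S.seq u a = a := (S.seq_of_le_sharp hu ha hau).1
    have h1 : S.seq u (l • b) = l • S.seq u b := S.seq_smul hu.1 hbeff hlpos.le hl1
    rw [← hab, hua] at h1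
    have h2 : l • b = l • S.seq u b := by rw [← hab]; exact h1
    have h3 : b = S.seq u b := smul_right_injective V (ne_of_gt hlpos) h2
    rw [h3]
    exact S.seq_le_left hu.1 hbeff
  obtain ⟨p, hp, hpb, hbp, hbpc, hconv⟩ := S.limit_proj hbeff
  have hpnorm : ‖p‖ = 1 := by
    have h1 : Filter.Tendsto (fun n => ‖S.pw b n‖) Filter.atTop (nhds ‖p‖) := hconv.norm
    have h2 : (fun n => ‖S.pw b n‖) = fun _ => (1:ℝ) := by
      funext n; exact S.pw_norm_one hbeff hbnorm n
    rw [h2] at h1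
    exact tendsto_nhds_unique h1 tendsto_const_nhds
  have hpu : p ≤ u := le_trans hpb hbu
  have hlp_le_a : l • p ≤ a := by
    rw [hab]; exact S.smul_le_smul'' hlpos.le hpb
  have ha'_eff : S.Eff (a - l • p) := by
    apply S.eff_mk (S.sub_nonneg' hlp_le_a)
    have h1 : a - l • p ≤ a := by
      have := S.sub_le_sub' (le_refl a) (S.smul_nonneg' hlpos.le (S.eff_nonneg hp.1))
      simpa using this
    exact le_trans h1 (S.eff_le_one ha)
  have ha'_le : a - l • p ≤ u - p := by
    have h1 : a - l • p = l • (b - p) := by rw [smul_sub, ← hab]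
    have h2 : l • (b - p) ≤ (1:ℝ) • (b - p) :=
      S.smul_le_smul_scalar hl1 (S.sub_nonneg' hpb)
    rw [h1]
    calc l • (b - p) ≤ (1:ℝ) • (b - p) := h2
      _ = b - p := one_smul _ _
      _ ≤ u - p := S.sub_le_sub' hbu le_rfl
  -- compatibility of p with a via s6b
  have hlp_eff : S.Eff (l • p) := S.eff_smul hlpos.le hl1 hp.1
  have hlp_le_p : l • p ≤ p := by
    have := S.smul_le_smul_scalar hl1 (S.eff_nonneg hp.1)
    simpa using this
  have hcomp1 : S.seq p (l • p) = S.seq (l • p) p := by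
    obtain ⟨e1, e2⟩ := S.seq_of_le_sharp hp hlp_eff hlp_le_p
    rw [e1, e2]
  have hqle : u - p ≤ S.unit - p := S.sub_le_sub' (S.eff_le_one hu.1) le_rfl
  have hpa' : S.seq p (a - l • p) = 0 :=
    S.seq_eq_zero_of_le_compl hp ha'_eff (le_trans ha'_le hqle)
  have ha'p : S.seq (a - l • p) p = 0 := S.s4 p _ hp.1 ha'_eff hpa'
  have hcomp2 : S.seq p (a - l • p) = S.seq (a - l • p) p := by rw [hpa', ha'p]
  have hsum : l • p + (a - l • p) = a := by abel
  have hcompat : S.seq p a = S.seq a p := by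
    have := S.s6b p (l • p) (a - l • p) hp.1 hlp_eff ha'_eff (by rw [hsum]; exact ha)
      hcomp1 hcomp2
    rwa [hsum] at this
  exact ⟨p, hp, hpnorm, hpu, ha'_eff, ha'_le, hcompat.symm, hlpos, hl1⟩

end SPS

namespace SPS

variable {V : Type*} [NormedAddCommGroup V] [NormedSpace ℝ V] [PartialOrder V]
variable [FiniteDimensional ℝ V] (S : SPS V)

lemma main_aux : ∀ (N : ℕ) (u a : V), S.SharpI u → S.Eff a → a ≤ u →
    Module.finrank ℝ (Submodule.span ℝ {x : V | S.Eff x ∧ x ≤ u}) ≤ N →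
    ∃ (n : ℕ) (p : Fin n → V) (l : Fin n → ℝ),
      (∀ i, S.SharpI (p i)) ∧
      (∀ i j, i ≠ j → S.seq (p i) (p j) = 0) ∧
      (∀ i, S.seq a (p i) = S.seq (p i) a) ∧
      (∀ i, 0 < l i) ∧
      (∀ i, p i ≤ u) ∧
      a = ∑ i, l i • p i := by
  intro N
  induction N with
  | zero =>
    intro u a hu ha hau hrank
    -- the span is trivial, so a = 0
    have hrank0 : Module.finrank ℝ (Submodule.span ℝ {x : V | S.Eff x ∧ x ≤ u}) = 0 :=
      Nat.le_zero.1 hrank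
    have hbot : Submodule.span ℝ {x : V | S.Eff x ∧ x ≤ u} = ⊥ :=
      Submodule.finrank_eq_zero.1 hrank0
    have ha0 : a = 0 := by
      have hmem : a ∈ Submodule.span ℝ {x : V | S.Eff x ∧ x ≤ u} :=
        Submodule.subset_span ⟨ha, hau⟩
      rw [hbot] at hmem
      simpa using hmem
    exact ⟨0, Fin.elim0, Fin.elim0, fun i => i.elim0, fun i => i.elim0,
      fun i => i.elim0, fun i => i.elim0, fun i => i.elim0, by simp [ha0]⟩
  | succ N ih =>
    intro u a hu ha hau hrank
    by_cases ha0 : a = 0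
    · exact ⟨0, Fin.elim0, Fin.elim0, fun i => i.elim0, fun i => i.elim0,
        fun i => i.elim0, fun i => i.elim0, fun i => i.elim0, by simp [ha0]⟩
    obtain ⟨p, hp, hpnorm, hpu, ha'_eff, ha'_le, hcompat, hlpos, hl1⟩ :=
      S.peel hu ha hau ha0
    set l : ℝ := ‖a‖
    set a' : V := a - l • p with ha'
    set q : V := u - p with hq
    obtain ⟨hq_sharp, hpq0⟩ := S.sharp_sub hp hu hpu
    have hqle : q ≤ S.unit - p := S.sub_le_sub' (S.eff_le_one hu.1) le_rfl
    have hqu : q ≤ u := by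
      have := S.sub_le_sub' (le_refl u) (S.eff_nonneg hp.1)
      simpa using this
    -- the state separating p from the face below q
    obtain ⟨φ, hφp, hφ0⟩ := S.exists_state hp.1 hpnorm
    -- rank decreases
    have hsub : {x : V | S.Eff x ∧ x ≤ q} ⊆ {x : V | S.Eff x ∧ x ≤ u} :=
      fun x hx => ⟨hx.1, le_trans hx.2 hqu⟩
    have hlt : Submodule.span ℝ {x : V | S.Eff x ∧ x ≤ q} <
        Submodule.span ℝ {x : V | S.Eff x ∧ x ≤ u} := by
      rw [SetLike.lt_iff_le_and_exists]
      refine ⟨Submodule.span_mono hsub, p, Submodule.subset_span ⟨hp.1, hpu⟩, ?_⟩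
      intro hmem
      have hker : Submodule.span ℝ {x : V | S.Eff x ∧ x ≤ q} ≤ LinearMap.ker φ := by
        rw [Submodule.span_le]
        intro x hx
        rw [SetLike.mem_coe, LinearMap.mem_ker]
        exact hφ0 x hx.1 (le_trans hx.2 hqle)
      have := hker hmem
      rw [LinearMap.mem_ker] at this
      rw [this] at hφp
      norm_num at hφp
    have hrank' : Module.finrank ℝ (Submodule.span ℝ {x : V | S.Eff x ∧ x ≤ q}) ≤ N := by
      have := Submodule.finrank_lt_finrank_of_lt hlt
      omega
    -- induction hypothesis on a'
    obtain ⟨n, pf, lf, hsharp', horth', hcompat', hpos', hle', hsum'⟩ :=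
      ih q a' hq_sharp ha'_eff ha'_le hrank'
    -- assemble
    refine ⟨n + 1, Fin.cons p pf, Fin.cons l lf, ?_, ?_, ?_, ?_, ?_, ?_⟩
    · intro i
      induction i using Fin.cases with
      | zero => simpa using hp
      | succ j => simpa using hsharp' j
    · intro i j hij
      have horthp : ∀ k, S.seq p (pf k) = 0 := by
        intro k
        exact S.seq_eq_zero_of_le_compl hp (hsharp' k).1 (le_trans (hle' k) hqle)
      induction i using Fin.cases with
      | zero =>
        induction j using Fin.cases with
        | zero => exact absurd rfl hij
        | succ k => simpa using horthp k
      | succ k =>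
        induction j using Fin.cases with
        | zero =>
          have := S.s4 p (pf k) hp.1 (hsharp' k).1 (horthp k)
          simpa using this
        | succ m =>
          have hkm : k ≠ m := fun h => hij (by rw [h])
          simpa using horth' k m hkm
    · intro i
      induction i using Fin.cases with
      | zero => simpa using hcompat
      | succ j =>
        -- q_j is compatible with l•p (orthogonal) and with a', hence with a
        have hqj_eff : S.Eff (pf j) := (hsharp' j).1
        have hqjp : S.seq (pf j) p = 0 :=
          S.s4 p (pf j) hp.1 hqj_eff
            (S.seq_eq_zero_of_le_compl hp hqj_eff (le_trans (hle' j) hqle))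
        have hlp_eff : S.Eff (l • p) := S.eff_smul hlpos.le hl1 hp.1
        have hqjlp : S.seq (pf j) (l • p) = 0 := by
          rw [S.seq_smul hqj_eff hp.1 hlpos.le hl1, hqjp, smul_zero]
        have hlpqj : S.seq (l • p) (pf j) = 0 :=
          S.s4 (pf j) (l • p) hqj_eff hlp_eff hqjlp
        have hc1 : S.seq (pf j) (l • p) = S.seq (l • p) (pf j) := by rw [hqjlp, hlpqj]
        have hc2 : S.seq (pf j) a' = S.seq a' (pf j) := (hcompat' j).symm
        have hsum : l • p + a' = a := by rw [ha']; abel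
        have := S.s6b (pf j) (l • p) a' hqj_eff hlp_eff ha'_eff
          (by rw [hsum]; exact ha) hc1 hc2
        rw [hsum] at this
        simpa using this.symm
    · intro i
      induction i using Fin.cases with
      | zero => simpa using hlpos
      | succ j => simpa using hpos' j
    · intro i
      induction i using Fin.cases with
      | zero => simpa using hpu
      | succ j => simpa using le_trans (hle' j) hqu
    · rw [Fin.sum_univ_succ]
      simp only [Fin.cons_zero, Fin.cons_succ]
      rw [← hsum', ha']
      abel

end SPS

/-- spectral decomposition of effects. -/
theorem spectral_decomposition {V : Type*} [NormedAddCommGroup V] [NormedSpace ℝ V]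
    [PartialOrder V] [FiniteDimensional ℝ V] (S : SPS V) (a : V) (ha : S.Eff a) :
    ∃ (n : ℕ) (p : Fin n → V) (l : Fin n → ℝ),
      (∀ i, S.SharpI (p i)) ∧
      (∀ i j, i ≠ j → S.seq (p i) (p j) = 0) ∧
      (∀ i, S.Compat a (p i)) ∧
      (∀ i, 0 < l i) ∧
      a = ∑ i, l i • p i := by
  obtain ⟨n, p, l, h1, h2, h3, h4, _, h6⟩ := S.main_aux
    (Module.finrank ℝ (Submodule.span ℝ {x : V | S.Eff x ∧ x ≤ S.unit}))
    S.unit a S.sharp_unit ha (S.eff_le_one ha) le_rfl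
  exact ⟨n, p, l, h1, h2, h3, h4, h6⟩
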